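/- arXiv:1401.1966 — 9 statements merged into one kernel-verified Lean document; each statement's English description precedes it below -/
import Mathlib

section
/- Let ρ ∈ (1/2, 1) and let z₁, z₂ be positive natural numbers with z₁ + z₂ odd and |z₁ - z₂| ≥ 2. Then ℓ_ρ(z₁) + ℓ_ρ(z₂) > ℓ_ρ(⌊(z₁+z₂)/2⌋) + ℓ_ρ(⌊(z₁+z₂)/2⌋ + 1). -/
noncomputable def ell (ρ x : ℝ) : ℝ := Real.sqrt ((1 - ρ)^2 + (x - (1 - ρ))^2)

lemma key_strict (a p s : ℝ) (ha : a ≠ 0) (hps : p ≠ s) (t : ℝ) (ht0 : 0 < t) (ht1 : t < 1) :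
    Real.sqrt (a^2 + (t*p+(1-t)*s)^2) < t * Real.sqrt (a^2+p^2) + (1-t) * Real.sqrt (a^2+s^2) := by
  set z : ℂ := ⟨a, p⟩ with hz
  set w : ℂ := ⟨a, s⟩ with hw
  have hzne : z ≠ 0 := fun h => ha (by simpa [hz] using congrArg Complex.re h)
  have hwne : w ≠ 0 := fun h => ha (by simpa [hw] using congrArg Complex.re h)
  have habs : ∀ u v : ℝ, ‖(⟨u, v⟩ : ℂ)‖ = Real.sqrt (u^2 + v^2) := by
    intro u v
    rw [Complex.norm_def, Complex.normSq_mk]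
    ring_nf
  have hadd : t • z + (1-t) • w = (⟨a, t*p+(1-t)*s⟩ : ℂ) := by
    apply Complex.ext <;> simp [hz, hw, Complex.smul_re, Complex.smul_im] <;> ring
  have hray : ¬ SameRay ℝ (t • z) ((1-t) • w) := by
    intro h
    obtain ⟨r₁, r₂, hr₁, hr₂, heq⟩ := h.exists_pos
      (smul_ne_zero ht0.ne' hzne) (smul_ne_zero (by linarith) hwne)
    rw [smul_smul, smul_smul] at heq
    have hre := congrArg Complex.re heq
    have him := congrArg Complex.im heq
    simp [hz, hw, Complex.smul_re, Complex.smul_im] at hre him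
    have h1 : r₁ * t = r₂ * (1 - t) := hre.resolve_right ha
    rw [h1] at him
    have : p = s := by
      have h2 : r₂ * (1-t) ≠ 0 := mul_ne_zero hr₂.ne' (by linarith)
      exact mul_left_cancel₀ h2 him
    exact hps this
  have h := norm_add_lt_of_not_sameRay hray
  rw [hadd, norm_smul, norm_smul] at h
  rw [Real.norm_of_nonneg ht0.le, Real.norm_of_nonneg (by linarith : (0:ℝ) ≤ 1 - t)] at h
  simpa [habs] using h

lemma chord (a p q r s : ℝ) (ha : a ≠ 0) (hpq : p < q) (hqr : q < r) (hrs : r < s)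
    (hsum : p + s = q + r) :
    Real.sqrt (a^2+q^2) + Real.sqrt (a^2+r^2) < Real.sqrt (a^2+p^2) + Real.sqrt (a^2+s^2) := by
  have hps : p < s := by linarith
  set t : ℝ := (s - q) / (s - p) with htdef
  have hsp : (0:ℝ) < s - p := by linarith
  have ht0 : 0 < t := div_pos (by linarith) hsp
  have ht1 : t < 1 := (div_lt_one hsp).2 (by linarith)
  have hq : q = t*p + (1-t)*s := by rw [htdef]; field_simp [hsp.ne']; ring
  have hr : r = (1-t)*p + t*s := by
    have : r = p + s - q := by linarith
    rw [this, htdef]; field_simp [hsp.ne']; ring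
  have h1 := key_strict a p s ha hps.ne t ht0 ht1
  have h2 := key_strict a p s ha hps.ne (1-t) (by linarith) (by linarith)
  rw [← hq] at h1
  have hr' : (1-t)*p + (1-(1-t))*s = r := by rw [hr]; ring
  rw [hr'] at h2
  linarith

theorem ell_odd_split (ρ : ℝ) (hρ : ρ ∈ Set.Ioo (1/2 : ℝ) 1)
    (z₁ z₂ : ℕ) (hz₁ : 1 ≤ z₁) (hz₂ : 1 ≤ z₂)
    (hodd : Odd (z₁ + z₂)) (hgap : 2 ≤ |(z₁ : ℤ) - (z₂ : ℤ)|) :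
    ell ρ z₁ + ell ρ z₂ >
      ell ρ (((z₁ + z₂) / 2 : ℕ)) + ell ρ ((((z₁ + z₂) / 2 : ℕ) : ℝ) + 1) := by
  obtain ⟨hρ1, hρ2⟩ := hρ
  have ha : (1 - ρ) ≠ 0 := by intro h; linarith
  set m : ℕ := (z₁ + z₂) / 2 with hm
  obtain ⟨k, hk⟩ := hodd
  have hmk : m = k := by omega
  -- the difference is odd and ≥ 2, hence ≥ 3
  have hgap3 : 3 ≤ |(z₁ : ℤ) - (z₂ : ℤ)| := by
    rcases abs_cases ((z₁ : ℤ) - (z₂ : ℤ)) with ⟨h, _⟩ | ⟨h, _⟩ <;> omega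
  set c : ℝ := 1 - ρ with hc
  have ell_eq : ∀ x : ℝ, ell ρ x = Real.sqrt ((1-ρ)^2 + (x - c)^2) := fun x => rfl
  have main : ∀ u v : ℕ, u + 3 ≤ v → u + v = 2*m + 1 →
      ell ρ u + ell ρ v > ell ρ m + ell ρ ((m : ℝ) + 1) := by
    intro u v huv hsum2
    have hu : u < m := by omega
    have hv : m + 1 < v := by omega
    have hu' : (u:ℝ) < m := by exact_mod_cast hu
    have hv' : ((m:ℝ)+1) < v := by exact_mod_cast hv
    have hs' : (u:ℝ) + v = 2*m + 1 := by exact_mod_cast hsum2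
    have key := chord (1-ρ) ((u:ℝ) - c) ((m:ℝ) - c) (((m:ℝ)+1) - c) ((v:ℝ) - c) ha
      (by linarith) (by linarith) (by linarith) (by linarith)
    rw [ell_eq, ell_eq, ell_eq, ell_eq]
    linarith
  have habs : z₁ + 3 ≤ z₂ ∨ z₂ + 3 ≤ z₁ := by
    rcases abs_cases ((z₁ : ℤ) - (z₂ : ℤ)) with ⟨h, _⟩ | ⟨h, _⟩ <;> omega
  rcases habs with h | h
  · exact main z₁ z₂ h (by omega)
  · have := main z₂ z₁ h (by omega)
    linarith
end

section
/- Let ρ ∈ (1/2, 1) and let z₁ ≥ 2 be an even natural number. Then ℓ_ρ(z₁) > 2 · ℓ_ρ(z₁/2). -/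
theorem ell_even_halve (ρ : ℝ) (hρ : ρ ∈ Set.Ioo (1/2 : ℝ) 1)
    (z₁ : ℕ) (hz₁ : 2 ≤ z₁) (heven : Even z₁) :
    ell ρ z₁ > 2 * ell ρ ((z₁ / 2 : ℕ)) := by
  obtain ⟨m, hm⟩ := heven
  have hm2 : z₁ = 2 * m := by omega
  have hm1 : 1 ≤ m := by omega
  have hhalf : z₁ / 2 = m := by omega
  subst hm2
  rw [hhalf]
  obtain ⟨h1, h2⟩ := hρ
  set a : ℝ := 1 - ρ with ha
  have ha0 : 0 < a := by simp [ha]; linarith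
  have ha12 : a < 1/2 := by simp [ha]; linarith
  have hM : (1 : ℝ) ≤ (m : ℝ) := by exact_mod_cast hm1
  unfold ell
  rw [show (2:ℝ) = Real.sqrt 4 by
    rw [show (4:ℝ) = 2^2 by norm_num, Real.sqrt_sq]; norm_num,
    ← Real.sqrt_mul (by norm_num)]
  apply Real.sqrt_lt_sqrt
  · positivity
  · push_cast
    nlinarith [sq_nonneg ((m:ℝ) - a)]
end

section
/- Let ρ ∈ (1/2, 1) and let z₁ ≥ 3 be an odd natural number. Then ℓ_ρ(z₁) > ℓ_ρ(⌊z₁/2⌋) + ℓ_ρ(⌊z₁/2⌋ + 1). -/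
lemma sqrt_upper (a t : ℝ) (ht : 0 < t) :
    Real.sqrt (a^2 + t^2) ≤ t + a^2 / (2*t) := by
  have h1 : a^2 + t^2 ≤ (t + a^2/(2*t))^2 := by
    have h2 : (t + a^2/(2*t))^2 = t^2 + a^2 + (a^2/(2*t))^2 := by
      field_simp; ring
    nlinarith [sq_nonneg (a^2/(2*t))]
  calc Real.sqrt (a^2 + t^2) ≤ Real.sqrt ((t + a^2/(2*t))^2) := Real.sqrt_le_sqrt h1
    _ = t + a^2/(2*t) := Real.sqrt_sq (by positivity)

theorem ell_odd_halve (ρ : ℝ) (hρ : ρ ∈ Set.Ioo (1/2 : ℝ) 1)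
    (z₁ : ℕ) (hz₁ : 3 ≤ z₁) (hodd : Odd z₁) :
    ell ρ z₁ > ell ρ ((z₁ / 2 : ℕ)) + ell ρ (((z₁ / 2 : ℕ) : ℝ) + 1) := by
  obtain ⟨hρ1, hρ2⟩ := hρ
  set a : ℝ := 1 - ρ with ha
  have ha0 : 0 < a := by simp [ha]; linarith
  have ha2 : a < 1/2 := by simp [ha]; linarith
  set k : ℕ := z₁ / 2 with hk
  have hk1 : 1 ≤ k := by omega
  have hz : (z₁ : ℝ) = 2 * (k : ℝ) + 1 := by
    obtain ⟨m, hm⟩ := hodd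
    have hkm : (k:ℝ) = (m:ℝ) := by exact_mod_cast (show k = m by omega)
    rw [hm, hkm]; push_cast; ring
  have hkR : (1 : ℝ) ≤ (k : ℝ) := by exact_mod_cast hk1
  -- bounds
  have t1pos : (0:ℝ) < (k:ℝ) - a := by linarith
  have t2pos : (0:ℝ) < (k:ℝ) + 1 - a := by linarith
  have hub1 : ell ρ (k : ℝ) ≤ ((k:ℝ) - a) + a^2 := by
    have := sqrt_upper a ((k:ℝ) - a) t1pos
    have hdiv : a^2 / (2*((k:ℝ)-a)) ≤ a^2 :=
      div_le_self (sq_nonneg a) (by linarith)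
    unfold ell
    calc Real.sqrt ((1-ρ)^2 + ((k:ℝ) - (1-ρ))^2)
        ≤ ((k:ℝ)-a) + a^2 / (2*((k:ℝ)-a)) := by rw [← ha]; exact this
      _ ≤ ((k:ℝ)-a) + a^2 := by linarith
  have hub2 : ell ρ ((k:ℝ)+1) ≤ ((k:ℝ) + 1 - a) + a^2 := by
    have := sqrt_upper a ((k:ℝ) + 1 - a) t2pos
    have hdiv : a^2 / (2*((k:ℝ)+1-a)) ≤ a^2 :=
      div_le_self (sq_nonneg a) (by linarith)
    unfold ell
    calc Real.sqrt ((1-ρ)^2 + (((k:ℝ)+1) - (1-ρ))^2)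
        = Real.sqrt (a^2 + ((k:ℝ)+1-a)^2) := by
          rw [show (1-ρ) = a from ha.symm]
      _ ≤ ((k:ℝ)+1-a) + a^2 / (2*((k:ℝ)+1-a)) := this
      _ ≤ ((k:ℝ)+1-a) + a^2 := by linarith
  have hlb : (z₁ : ℝ) - a < ell ρ (z₁ : ℝ) := by
    unfold ell
    rw [← ha]
    have hzpos : (0:ℝ) ≤ (z₁:ℝ) - a := by rw [hz]; linarith
    rw [Real.lt_sqrt hzpos]
    nlinarith
  have key : ((k:ℝ) - a + a^2) + ((k:ℝ) + 1 - a + a^2) ≤ (z₁:ℝ) - a := by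
    rw [hz]; nlinarith
  linarith
end

section
/- Let ρ ∈ (1/2, 1), k ≥ 1 a natural number, and M = ℓ₁k + s₁ with ℓ₁ ≥ 1, 0 ≤ s₁ < k. Among all k-tuples (m₁,...,m_k) of positive natural numbers with m₁ + ... + m_k = M, the sum Σᵢ ℓ_ρ(mᵢ) is minimized precisely by tuples having k - s₁ entries equal to ℓ₁ and s₁ entries equal to ℓ₁ + 1 (i.e., any tuple not of this form up to permutation gives a strictly larger sum). -/
lemma sqrt_strictConvex (c A : ℝ) (hc : 0 < c) :
    StrictConvexOn ℝ Set.univ (fun x : ℝ => Real.sqrt (c^2 + (x - A)^2)) := by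
  refine ⟨convex_univ, ?_⟩
  intro x _ y _ hxy a b ha hb hab
  simp only [smul_eq_mul]
  set u := x - A with hu
  set v := y - A with hv
  have huv : u ≠ v := by intro h; apply hxy; have : x - A = y - A := h; linarith
  have hP : (c^2 + u*v)^2 < (c^2 + u^2)*(c^2 + v^2) := by
    have hne : u - v ≠ 0 := sub_ne_zero.mpr huv
    have h1 : 0 < (u - v)^2 := by positivity
    nlinarith [sq_nonneg c, mul_pos (pow_pos hc 2) h1]
  have hprod : (0:ℝ) ≤ (c^2 + u^2)*(c^2 + v^2) := by positivity
  have hkey : c^2 + u*v < Real.sqrt ((c^2 + u^2)*(c^2 + v^2)) := by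
    have h1 : c^2 + u*v ≤ |c^2 + u*v| := le_abs_self _
    have h2 : |c^2 + u*v| = Real.sqrt ((c^2+u*v)^2) := (Real.sqrt_sq_eq_abs _).symm
    have h3 : Real.sqrt ((c^2+u*v)^2) < Real.sqrt ((c^2 + u^2)*(c^2 + v^2)) :=
      Real.sqrt_lt_sqrt (sq_nonneg _) hP
    linarith
  set gx := Real.sqrt (c^2 + u^2) with hgx
  set gy := Real.sqrt (c^2 + v^2) with hgy
  have hgx2 : gx^2 = c^2 + u^2 := Real.sq_sqrt (by positivity)
  have hgy2 : gy^2 = c^2 + v^2 := Real.sq_sqrt (by positivity)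
  have hgxpos : 0 < gx := Real.sqrt_pos.mpr (by positivity)
  have hgypos : 0 < gy := Real.sqrt_pos.mpr (by positivity)
  have hmul : gx * gy = Real.sqrt ((c^2 + u^2)*(c^2 + v^2)) :=
    (Real.sqrt_mul (by positivity) _).symm
  have hrhs : 0 < a * gx + b * gy := by positivity
  have harg : a * x + b * y - A = a * u + b * v := by
    rw [hu, hv]; linear_combination A * hab
  rw [harg]
  rw [show Real.sqrt (c^2 + (a*u + b*v)^2) < a * gx + b * gy ↔ _ from Real.sqrt_lt' hrhs]
  rw [← hmul] at hkey
  have e1 : a^2 * gx^2 = a^2 * (c^2 + u^2) := by rw [hgx2]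
  have e2 : b^2 * gy^2 = b^2 * (c^2 + v^2) := by rw [hgy2]
  have e3 : (a + b)^2 * c^2 = c^2 := by rw [hab]; ring
  have hprod2 : 0 < (a * b) * (gx * gy - (c^2 + u*v)) :=
    mul_pos (mul_pos ha hb) (by linarith)
  nlinarith [e1, e2, e3, hprod2]

lemma line_lt (ρ : ℝ) (hρ2 : ρ < 1) (L x : ℝ) (hx : x < L ∨ L + 1 < x) :
    ell ρ L + (ell ρ (L+1) - ell ρ L) * (x - L) < ell ρ x := by
  have hc : 0 < 1 - ρ := by linarith
  have sc := sqrt_strictConvex (1-ρ) (1-ρ) hc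
  simp only [ell]
  rcases hx with h | h
  · have hd : 0 < L + 1 - x := by linarith
    have ha : 0 < 1/(L+1-x) := by positivity
    have hb : 0 < (L-x)/(L+1-x) := div_pos (by linarith) hd
    have hab : 1/(L+1-x) + (L-x)/(L+1-x) = 1 := by field_simp; ring
    have hne : x ≠ L + 1 := by intro hh; rw [hh] at h; linarith
    have h2 := sc.2 (Set.mem_univ x) (Set.mem_univ (L+1)) hne ha hb hab
    simp only [smul_eq_mul] at h2
    have hmid : 1/(L+1-x) * x + (L-x)/(L+1-x) * (L+1) = L := by field_simp; ring
    rw [hmid] at h2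
    set fx := Real.sqrt ((1-ρ)^2 + (x - (1-ρ))^2)
    set fL := Real.sqrt ((1-ρ)^2 + (L - (1-ρ))^2)
    set f1 := Real.sqrt ((1-ρ)^2 + (L + 1 - (1-ρ))^2)
    have h3 := mul_lt_mul_of_pos_left h2 hd
    have hx0 : L + 1 - x ≠ 0 := ne_of_gt hd
    field_simp at h3
    nlinarith [h3]
  · have hd : 0 < x - L := by linarith
    have ha : 0 < (x-(L+1))/(x-L) := by
      apply div_pos; linarith; linarith
    have hb : 0 < 1/(x-L) := by positivity
    have hab : (x-(L+1))/(x-L) + 1/(x-L) = 1 := by field_simp; ring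
    have hne : L ≠ x := by intro hh; rw [hh] at h; linarith
    have h2 := sc.2 (Set.mem_univ L) (Set.mem_univ x) hne ha hb hab
    simp only [smul_eq_mul] at h2
    have hmid : (x-(L+1))/(x-L) * L + 1/(x-L) * x = L + 1 := by field_simp; ring
    rw [hmid] at h2
    set fx := Real.sqrt ((1-ρ)^2 + (x - (1-ρ))^2)
    set fL := Real.sqrt ((1-ρ)^2 + (L - (1-ρ))^2)
    set f1 := Real.sqrt ((1-ρ)^2 + (L + 1 - (1-ρ))^2)
    have h3 := mul_lt_mul_of_pos_left h2 hd
    have hx0 : x - L ≠ 0 := ne_of_gt hd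
    field_simp at h3
    nlinarith [h3]

lemma ell_nat_ge (ρ : ℝ) (hρ2 : ρ < 1) (ℓ₁ n : ℕ) :
    ell ρ ℓ₁ + (ell ρ ((ℓ₁:ℝ)+1) - ell ρ ℓ₁) * ((n:ℝ) - (ℓ₁:ℝ)) ≤ ell ρ n := by
  rcases eq_or_ne n ℓ₁ with h | h
  · subst h; simp
  rcases eq_or_ne n (ℓ₁+1) with h2 | h2
  · subst h2; refine le_of_eq ?_; push_cast; ring
  · have hor : (n:ℝ) < (ℓ₁:ℝ) ∨ (ℓ₁:ℝ) + 1 < (n:ℝ) := by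
      have : n < ℓ₁ ∨ ℓ₁ + 1 < n := by omega
      rcases this with h3 | h3
      · left; exact_mod_cast h3
      · right; exact_mod_cast h3
    exact (line_lt ρ hρ2 ℓ₁ n hor).le

lemma ell_nat_gt (ρ : ℝ) (hρ2 : ρ < 1) (ℓ₁ n : ℕ) (h : n ≠ ℓ₁) (h2 : n ≠ ℓ₁+1) :
    ell ρ ℓ₁ + (ell ρ ((ℓ₁:ℝ)+1) - ell ρ ℓ₁) * ((n:ℝ) - (ℓ₁:ℝ)) < ell ρ n := by
  have hor : (n:ℝ) < (ℓ₁:ℝ) ∨ (ℓ₁:ℝ) + 1 < (n:ℝ) := by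
    have : n < ℓ₁ ∨ ℓ₁ + 1 < n := by omega
    rcases this with h3 | h3
    · left; exact_mod_cast h3
    · right; exact_mod_cast h3
  exact line_lt ρ hρ2 ℓ₁ n hor

theorem equidistribution_minimizes (ρ : ℝ) (hρ : ρ ∈ Set.Ioo (1/2 : ℝ) 1)
    (k ℓ₁ s₁ M : ℕ) (hk : 1 ≤ k) (hℓ₁ : 1 ≤ ℓ₁) (hs₁ : s₁ < k)
    (hM : M = ℓ₁ * k + s₁) :
    ∀ m : Fin k → ℕ, (∀ i, 1 ≤ m i) → (∑ i, m i) = M →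
      ((k - s₁ : ℕ) : ℝ) * ell ρ ℓ₁ + (s₁ : ℝ) * ell ρ ((ℓ₁ : ℝ) + 1)
          ≤ ∑ i, ell ρ (m i) ∧
      ((∑ i, ell ρ (m i)
          = ((k - s₁ : ℕ) : ℝ) * ell ρ ℓ₁ + (s₁ : ℝ) * ell ρ ((ℓ₁ : ℝ) + 1)) ↔
        (∀ i, m i = ℓ₁ ∨ m i = ℓ₁ + 1) ∧
          (Finset.univ.filter (fun i => m i = ℓ₁ + 1)).card = s₁) := by
  obtain ⟨hρ1, hρ2⟩ := hρ
  intro m hm hsum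
  set α : ℝ := ell ρ ((ℓ₁:ℝ)+1) - ell ρ ℓ₁ with hα
  have hks : ((k - s₁ : ℕ):ℝ) = (k:ℝ) - (s₁:ℝ) := by
    exact_mod_cast Nat.cast_sub hs₁.le
  have hsumR : ∑ i, ((m i : ℝ)) = (ℓ₁:ℝ) * (k:ℝ) + (s₁:ℝ) := by
    have h0 := congrArg (Nat.cast : ℕ → ℝ) hsum
    rw [hM] at h0
    push_cast at h0 ⊢
    linarith [h0]
  have hLsum : ∑ i, (ell ρ ℓ₁ + α * ((m i:ℝ) - (ℓ₁:ℝ)))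
      = ((k - s₁ : ℕ) : ℝ) * ell ρ ℓ₁ + (s₁ : ℝ) * ell ρ ((ℓ₁ : ℝ) + 1) := by
    have e : ∀ i : Fin k, ell ρ ℓ₁ + α * ((m i:ℝ) - (ℓ₁:ℝ))
        = (ell ρ ℓ₁ - α * (ℓ₁:ℝ)) + α * (m i:ℝ) := fun i => by ring
    simp_rw [e]
    rw [Finset.sum_add_distrib, Finset.sum_const, Finset.card_univ, Fintype.card_fin,
      ← Finset.mul_sum, hsumR, hks, nsmul_eq_mul, hα]
    ring
  have hle : ∀ i ∈ Finset.univ, ell ρ ℓ₁ + α * ((m i:ℝ) - (ℓ₁:ℝ)) ≤ ell ρ (m i) :=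
    fun i _ => ell_nat_ge ρ hρ2 ℓ₁ (m i)
  have hlow := Finset.sum_le_sum hle
  rw [hLsum] at hlow
  refine ⟨hlow, ?_, ?_⟩
  · intro heq
    have heq2 : ∑ i, ell ρ (m i) = ∑ i, (ell ρ ℓ₁ + α * ((m i:ℝ) - (ℓ₁:ℝ))) := by
      rw [hLsum, heq]
    have hptw := (Finset.sum_eq_sum_iff_of_le hle).mp heq2.symm
    have hmem : ∀ i, m i = ℓ₁ ∨ m i = ℓ₁ + 1 := by
      intro i
      by_contra hcon
      push_neg at hcon
      have hstrict := ell_nat_gt ρ hρ2 ℓ₁ (m i) hcon.1 hcon.2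
      rw [← hα] at hstrict
      exact absurd ((hptw i (Finset.mem_univ i)).symm) (ne_of_gt hstrict)
    refine ⟨hmem, ?_⟩
    have hdecomp : ∑ i, m i = k * ℓ₁ +
        (Finset.univ.filter (fun i => m i = ℓ₁ + 1)).card := by
      rw [Finset.card_filter]
      have e2 : ∀ i : Fin k, m i = ℓ₁ + (if m i = ℓ₁ + 1 then 1 else 0) := by
        intro i
        rcases hmem i with h | h <;> simp [h]
      calc ∑ i, m i = ∑ i, (ℓ₁ + if m i = ℓ₁ + 1 then 1 else 0) :=
            Finset.sum_congr rfl (fun i _ => e2 i)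
        _ = k * ℓ₁ + ∑ i, (if m i = ℓ₁ + 1 then 1 else 0) := by
            rw [Finset.sum_add_distrib, Finset.sum_const, Finset.card_univ,
              Fintype.card_fin, smul_eq_mul]
    rw [hsum, hM, Nat.mul_comm k ℓ₁] at hdecomp
    omega
  · rintro ⟨hmem, hcard⟩
    have e3 : ∀ i : Fin k, ell ρ (m i)
        = (if m i = ℓ₁ + 1 then ell ρ ((ℓ₁:ℝ)+1) else ell ρ ℓ₁) := by
      intro i
      rcases hmem i with h | h
      · rw [h, if_neg (by omega)]
      · rw [h, if_pos rfl]; push_cast; ring_nf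
    rw [Finset.sum_congr rfl (fun i _ => e3 i), Finset.sum_ite, Finset.sum_const,
      Finset.sum_const, hcard]
    have hcard2 : (Finset.univ.filter (fun i => ¬ m i = ℓ₁ + 1)).card = k - s₁ := by
      have h4 := Finset.card_filter_add_card_filter_not
        (s := (Finset.univ : Finset (Fin k))) (p := fun i => m i = ℓ₁ + 1)
      rw [hcard, Finset.card_univ, Fintype.card_fin] at h4
      omega
    rw [hcard2, nsmul_eq_mul, nsmul_eq_mul]
    ring
end

section
/- Let ρ ∈ (1/2, 1). Let (z₁,...,z_k) be positive natural numbers and suppose some zⱼ ≥ 2. Then there exists a (k+1)-tuple (ẑ₁,...,ẑ_{k+1}) of positive natural numbers with the same total sum such that Σᵢ₌₁ᵏ ℓ_ρ(zᵢ) > Σᵢ₌₁ᵏ⁺¹ ℓ_ρ(ẑᵢ). -/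
lemma key_ineq (a t : ℝ) (ha : 0 < a) (ha2 : a < 1/2) (ht : 1 ≤ t) :
    Real.sqrt (a^2 + (t - a)^2) + Real.sqrt (a^2 + (1 - a)^2)
      < Real.sqrt (a^2 + (t + 1 - a)^2) := by
  have hA : (0:ℝ) ≤ a^2 + (t-a)^2 := by positivity
  have hB : (0:ℝ) ≤ a^2 + (1-a)^2 := by positivity
  have hAn := Real.sqrt_nonneg (a^2+(t-a)^2)
  have hBn := Real.sqrt_nonneg (a^2+(1-a)^2)
  have hsA := Real.sq_sqrt hA
  have hsB := Real.sq_sqrt hB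
  rw [show a^2 + (t + 1 - a)^2
      = ((a^2+(t-a)^2) + (a^2+(1-a)^2)) + (2*t - 2*a^2) by ring] at *
  have hprod : Real.sqrt (a^2+(t-a)^2) * Real.sqrt (a^2+(1-a)^2) < t - a^2 := by
    rw [← Real.sqrt_mul hA]
    have hpos : 0 < t - a^2 := by nlinarith
    rw [show t - a^2 = Real.sqrt ((t-a^2)^2) from (Real.sqrt_sq hpos.le).symm]
    apply Real.sqrt_lt_sqrt (by positivity)
    nlinarith [sq_nonneg (t-1), mul_pos ha (show (0:ℝ) < 1 - 2*a by linarith),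
      mul_nonneg (mul_pos ha (show (0:ℝ) < 1 - 2*a by linarith)).le (sub_nonneg.mpr ht),
      mul_nonneg (mul_pos ha ha).le (sub_nonneg.mpr ht), sq_nonneg a, sq_nonneg (1-a)]
  have hrhs : 0 ≤ Real.sqrt (a^2+(t-a)^2) + Real.sqrt (a^2+(1-a)^2) := by linarith
  rw [show Real.sqrt (a^2+(t-a)^2) + Real.sqrt (a^2+(1-a)^2)
      = Real.sqrt ((Real.sqrt (a^2+(t-a)^2) + Real.sqrt (a^2+(1-a)^2))^2)
      from (Real.sqrt_sq hrhs).symm]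
  apply Real.sqrt_lt_sqrt (by positivity)
  nlinarith [hprod, hsA, hsB]

theorem split_decreases_length (ρ : ℝ) (hρ : ρ ∈ Set.Ioo (1/2 : ℝ) 1)
    (k : ℕ) (z : Fin k → ℕ) (hz : ∀ i, 1 ≤ z i) (j : Fin k) (hj : 2 ≤ z j) :
    ∃ zhat : Fin (k + 1) → ℕ, (∀ i, 1 ≤ zhat i) ∧
      (∑ i, zhat i) = (∑ i, z i) ∧
      (∑ i, ell ρ (z i)) > ∑ i, ell ρ (zhat i) := by
  obtain ⟨hρ1, hρ2⟩ := hρ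
  set a : ℝ := 1 - ρ with ha_def
  have ha : 0 < a := by simp [ha_def]; linarith
  have ha2 : a < 1/2 := by simp [ha_def]; linarith
  have hne : ∀ i ∈ Finset.univ \ {j}, Function.update z j (z j - 1) i = z i := by
    intro i hi
    exact Function.update_of_ne (by simpa using (Finset.mem_sdiff.mp hi).2) _ _
  refine ⟨Fin.cons 1 (Function.update z j (z j - 1)), ?_, ?_, ?_⟩
  · intro i
    refine Fin.cases ?_ ?_ i
    · simp
    · intro i
      simp only [Fin.cons_succ, Function.update_apply]
      split_ifs with h
      · omega
      · exact hz i
  · rw [Fin.sum_univ_succ]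
    simp only [Fin.cons_zero, Fin.cons_succ]
    rw [Finset.sum_update_of_mem (Finset.mem_univ j),
      Finset.sum_eq_sum_sdiff_singleton_add (Finset.mem_univ j) z]
    omega
  · have hfun : (fun i => ell ρ ((Function.update z j (z j - 1) i : ℕ) : ℝ))
        = Function.update (fun i => ell ρ ((z i : ℕ) : ℝ)) j
            (ell ρ ((z j - 1 : ℕ) : ℝ)) := by
      funext i
      simp only [Function.update_apply]
      split_ifs with h <;> simp [h]
    rw [Fin.sum_univ_succ]
    simp only [Fin.cons_zero, Fin.cons_succ, Nat.cast_one]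
    rw [Finset.sum_congr rfl (fun i _ => congrFun hfun i),
      Finset.sum_update_of_mem (Finset.mem_univ j),
      Finset.sum_eq_sum_sdiff_singleton_add (Finset.mem_univ j)
        (fun i => ell ρ ((z i : ℕ) : ℝ))]
    have hcast : ((z j - 1 : ℕ) : ℝ) = (z j : ℝ) - 1 := by
      have h1 : 1 ≤ z j := by omega
      push_cast [h1]; ring
    have ht : (1:ℝ) ≤ (z j : ℝ) - 1 := by
      have : (2:ℝ) ≤ (z j : ℝ) := by exact_mod_cast hj
      linarith
    have key := key_ineq a ((z j : ℝ) - 1) ha ha2 ht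
    have h1 : ell ρ ((z j - 1 : ℕ) : ℝ) + ell ρ 1 < ell ρ (z j) := by
      simp only [ell, hcast, ← ha_def]
      convert key using 3 <;> ring
    linarith
end

section
/- Let ρ ∈ (1/2, 1) and let M ≥ N ≥ 1 be natural numbers. The minimum of L[(mᵢ),(nᵢ)] = Σᵢ₌₁ᵏ (ℓ_ρ(mᵢ) + ℓ_ρ(nᵢ)) over all k with 1 ≤ k ≤ N and positive natural tuples (mᵢ)ᵢ₌₁ᵏ, (nᵢ)ᵢ₌₁ᵏ with Σmᵢ = M, Σnᵢ = N, equals 𝓛_ρ(M,N) = N·ℓ_ρ(1) + (M - ⌊M/N⌋·N)·ℓ_ρ(⌊M/N⌋ + 1) + (N - M + ⌊M/N⌋·N)·ℓ_ρ(⌊M/N⌋). -/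
noncomputable def Lcal (ρ : ℝ) (M N : ℕ) : ℝ :=
  (N : ℝ) * ell ρ 1 + ((M - M / N * N : ℕ) : ℝ) * ell ρ (((M / N : ℕ) : ℝ) + 1)
    + ((N - (M - M / N * N) : ℕ) : ℝ) * ell ρ ((M / N : ℕ))

lemma ell_eq_abs (ρ t : ℝ) :
    ell ρ t = ‖(((t - (1 - ρ) : ℝ) : ℂ) + ((1 - ρ : ℝ) : ℂ) * Complex.I)‖ := by
  rw [Complex.norm_def, Complex.normSq_apply]
  simp [ell]
  congr 1
  ring

lemma ell_convex3 (ρ : ℝ) {x y z : ℝ} (hxy : x ≤ y) (hyz : y ≤ z) :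
    (z - x) * ell ρ y ≤ (z - y) * ell ρ x + (y - x) * ell ρ z := by
  have h1 : ((z - x : ℝ) : ℂ) * (((y - (1 - ρ) : ℝ) : ℂ) + ((1 - ρ : ℝ) : ℂ) * Complex.I)
      = ((z - y : ℝ) : ℂ) * (((x - (1 - ρ) : ℝ) : ℂ) + ((1 - ρ : ℝ) : ℂ) * Complex.I)
      + ((y - x : ℝ) : ℂ) * (((z - (1 - ρ) : ℝ) : ℂ) + ((1 - ρ : ℝ) : ℂ) * Complex.I) := by
    push_cast; ring
  calc (z - x) * ell ρ y
      = ‖(((z - x : ℝ) : ℂ) * (((y - (1 - ρ) : ℝ) : ℂ) + ((1 - ρ : ℝ) : ℂ) * Complex.I))‖ := by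
        rw [ell_eq_abs, norm_mul, Complex.norm_real, Real.norm_eq_abs, abs_of_nonneg (by linarith)]
    _ ≤ _ := by
        rw [h1]
        refine le_trans (norm_add_le _ _) ?_
        rw [norm_mul, norm_mul, Complex.norm_real, Complex.norm_real, Real.norm_eq_abs, Real.norm_eq_abs,
          abs_of_nonneg (by linarith : (0:ℝ) ≤ z - y), abs_of_nonneg (by linarith : (0:ℝ) ≤ y - x),
          ell_eq_abs ρ x, ell_eq_abs ρ z]

lemma secant_bound (ρ : ℝ) (q x : ℕ) :
    (ell ρ ((q:ℝ)+1) - ell ρ q) * x + (((q:ℝ)+1) * ell ρ q - q * ell ρ ((q:ℝ)+1)) ≤ ell ρ x := by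
  rcases le_or_gt x q with h | h
  · have h' : (x:ℝ) ≤ q := by exact_mod_cast h
    have := ell_convex3 ρ (x := (x:ℝ)) (y := (q:ℝ)) (z := (q:ℝ)+1) h' (by linarith)
    nlinarith [this]
  · have h' : (q:ℝ)+1 ≤ x := by exact_mod_cast h
    have := ell_convex3 ρ (x := (q:ℝ)) (y := (q:ℝ)+1) (z := (x:ℝ)) (by linarith) h'
    nlinarith [this]

lemma intercept_le (ρ : ℝ) (q : ℕ) (hq : 1 ≤ q) :
    ((q:ℝ)+1) * ell ρ q - q * ell ρ ((q:ℝ)+1) ≤ 2 * ell ρ 1 - ell ρ 2 := by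
  induction q with
  | zero => omega
  | succ j ih =>
    rcases Nat.lt_or_ge j 1 with hj | hj
    · interval_cases j
      norm_num
    · have ihj := ih hj
      have mid := ell_convex3 ρ (x := (j:ℝ)) (y := (j:ℝ)+1) (z := (j:ℝ)+1+1)
        (by linarith) (by linarith)
      have hcast : ((j+1 : ℕ) : ℝ) = (j:ℝ)+1 := by push_cast; ring
      rw [hcast]
      have hj' : (1:ℝ) ≤ j := by exact_mod_cast hj
      nlinarith [mid, ihj, mul_nonneg (by linarith : (0:ℝ) ≤ (j:ℝ)+1)
        (by linarith : (0:ℝ) ≤ ell ρ (j:ℝ) + ell ρ ((j:ℝ)+1+1) - 2 * ell ρ ((j:ℝ)+1))]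

lemma two_ell_one_le (ρ : ℝ) (hρ : ρ ∈ Set.Ioo (1/2 : ℝ) 1) : 2 * ell ρ 1 ≤ ell ρ 2 := by
  obtain ⟨h1, h2⟩ := hρ
  have e1 : ell ρ 1 ^ 2 = (1-ρ)^2 + (1 - (1-ρ))^2 := Real.sq_sqrt (by positivity)
  have e2 : ell ρ 2 ^ 2 = (1-ρ)^2 + (2 - (1-ρ))^2 := Real.sq_sqrt (by positivity)
  have p1 : 0 ≤ ell ρ 1 := Real.sqrt_nonneg _
  have p2 : 0 ≤ ell ρ 2 := Real.sqrt_nonneg _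
  nlinarith [p1, p2, e1, e2]

lemma fin_sum_ite {α : Type*} [AddCommMonoid α] (N r : ℕ) (hr : r ≤ N) (A B : α) :
    ∑ i : Fin N, (if (i : ℕ) < r then A else B) = r • A + (N - r) • B := by
  rw [show (∑ i : Fin N, (if (i : ℕ) < r then A else B)) = ∑ i ∈ Finset.range N, (if i < r then A else B) from Fin.sum_univ_eq_sum_range (fun i => if i < r then A else B) N]
  rw [← Finset.sum_range_add_sum_Ico _ hr]
  rw [Finset.sum_congr rfl (fun i hi => if_pos (Finset.mem_range.mp hi)),
    Finset.sum_congr rfl (fun i hi => if_neg (by simpa using (Finset.mem_Ico.mp hi).1.not_gt)),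
    Finset.sum_const, Finset.sum_const, Finset.card_range, Nat.card_Ico]

theorem geodesic_length (ρ : ℝ) (hρ : ρ ∈ Set.Ioo (1/2 : ℝ) 1)
    (M N : ℕ) (hN : 1 ≤ N) (hMN : N ≤ M) :
    IsLeast
      { L : ℝ | ∃ k : ℕ, 1 ≤ k ∧ k ≤ N ∧
          ∃ m n : Fin k → ℕ, (∀ i, 1 ≤ m i) ∧ (∀ i, 1 ≤ n i) ∧
            (∑ i, m i) = M ∧ (∑ i, n i) = N ∧
            L = ∑ i, (ell ρ (m i) + ell ρ (n i)) }
      (Lcal ρ M N) := by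
  have hN0 : 0 < N := hN
  have hdm : N * (M / N) + M % N = M := Nat.div_add_mod M N
  have hrlt : M % N < N := Nat.mod_lt M hN0
  have hq1 : 1 ≤ M / N := (Nat.one_le_div_iff hN0).mpr hMN
  have e1 : M - M / N * N = M % N := by rw [Nat.mul_comm]; omega
  have e2 : N - (M - M / N * N) = N - M % N := by rw [e1]
  have hMreal : (M : ℝ) = (N:ℝ) * ((M/N : ℕ) : ℝ) + ((M % N : ℕ) : ℝ) := by exact_mod_cast hdm.symm
  have hLcal : Lcal ρ M N = (N:ℝ) * ell ρ 1 + ((M % N : ℕ):ℝ) * ell ρ (((M/N : ℕ):ℝ)+1)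
      + ((N:ℝ) - ((M % N : ℕ):ℝ)) * ell ρ ((M/N : ℕ):ℝ) := by
    rw [Lcal, e2, e1, Nat.cast_sub hrlt.le]
  constructor
  · refine ⟨N, hN, le_refl N,
      (fun i => if (i:ℕ) < M % N then M/N + 1 else M/N), (fun _ => 1),
      (fun i => by dsimp only; split <;> omega), (fun _ => le_refl 1), ?_, by simp, ?_⟩
    · rw [fin_sum_ite N (M % N) hrlt.le]
      simp only [smul_eq_mul]
      have hmul1 : M % N * (M/N + 1) = M % N * (M/N) + M % N := by ring
      have hmul2 : (N - M % N) * (M/N) = N * (M/N) - M % N * (M/N) := Nat.sub_mul _ _ _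
      have hle : M % N * (M/N) ≤ N * (M/N) := Nat.mul_le_mul_right _ hrlt.le
      omega
    · have hterm : ∀ i : Fin N,
          ell ρ (((if (i:ℕ) < M % N then M/N + 1 else M/N : ℕ)) : ℝ)
          = (if (i:ℕ) < M % N then ell ρ (((M/N:ℕ):ℝ)+1) else ell ρ ((M/N : ℕ):ℝ)) := by
        intro i
        split
        · congr 1; push_cast; ring
        · rfl
      rw [Finset.sum_add_distrib,
        Finset.sum_congr rfl (fun i _ => hterm i),
        fin_sum_ite N (M % N) hrlt.le, Finset.sum_const, Finset.card_univ, Fintype.card_fin,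
        hLcal]
      simp only [nsmul_eq_mul, Nat.cast_sub hrlt.le, Nat.cast_one]
      ring
  · rintro L ⟨k, hk1, hkN, m, n, hm1, hn1, hmM, hnN, rfl⟩
    have hMc : ∑ i, ((m i : ℝ)) = (M:ℝ) := by rw [← Nat.cast_sum, hmM]
    have hNc : ∑ i, ((n i : ℝ)) = (N:ℝ) := by rw [← Nat.cast_sum, hnN]
    set Q : ℝ := ((M/N : ℕ) : ℝ) with hQ
    set A : ℝ := ell ρ (Q+1) - ell ρ Q with hA
    set B : ℝ := (Q+1) * ell ρ Q - Q * ell ρ (Q+1) with hB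
    have hsm : A * M + k * B ≤ ∑ i, ell ρ (m i) := by
      have : ∑ i, (A * (m i : ℝ) + B) ≤ ∑ i, ell ρ (m i) :=
        Finset.sum_le_sum (fun i _ => secant_bound ρ (M/N) (m i))
      calc A * M + k * B = ∑ i, (A * (m i : ℝ) + B) := by
            rw [Finset.sum_add_distrib, ← Finset.mul_sum, hMc, Finset.sum_const,
              Finset.card_univ, Fintype.card_fin, nsmul_eq_mul]
        _ ≤ _ := this
    have hBnd : ∀ i, (ell ρ 2 - ell ρ 1) * (n i : ℝ) + (2 * ell ρ 1 - ell ρ 2) ≤ ell ρ (n i) := by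
      intro i
      have := secant_bound ρ 1 (n i)
      norm_num at this
      linarith
    have hsn : (ell ρ 2 - ell ρ 1) * N + k * (2 * ell ρ 1 - ell ρ 2) ≤ ∑ i, ell ρ (n i) := by
      have : ∑ i, ((ell ρ 2 - ell ρ 1) * (n i : ℝ) + (2 * ell ρ 1 - ell ρ 2)) ≤ ∑ i, ell ρ (n i) :=
        Finset.sum_le_sum (fun i _ => hBnd i)
      calc (ell ρ 2 - ell ρ 1) * N + k * (2 * ell ρ 1 - ell ρ 2)
          = ∑ i, ((ell ρ 2 - ell ρ 1) * (n i : ℝ) + (2 * ell ρ 1 - ell ρ 2)) := by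
            rw [Finset.sum_add_distrib, ← Finset.mul_sum, hNc, Finset.sum_const,
              Finset.card_univ, Fintype.card_fin, nsmul_eq_mul]
        _ ≤ _ := this
    have hC : B ≤ 2 * ell ρ 1 - ell ρ 2 := intercept_le ρ (M/N) hq1
    have hD : 2 * ell ρ 1 ≤ ell ρ 2 := two_ell_one_le ρ hρ
    have hkR : (k : ℝ) ≤ N := by exact_mod_cast hkN
    have hLcal2 : Lcal ρ M N = A * M + N * B + N * ell ρ 1 := by
      rw [hLcal, hMreal, hA, hB]
      have hr' : ((M % N : ℕ):ℝ) = (M:ℝ) - (N:ℝ) * Q := by rw [hMreal]; ring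
      rw [hr', hMreal]
      ring
    have hsplit : ∑ i, (ell ρ (m i) + ell ρ (n i)) = (∑ i, ell ρ (m i)) + ∑ i, ell ρ (n i) :=
      Finset.sum_add_distrib
    rw [hsplit, hLcal2]
    nlinarith [mul_nonneg (sub_nonneg.mpr hkR)
      (by linarith : (0:ℝ) ≤ -(B + ell ρ 1 - (ell ρ 2 - ell ρ 1))), hsm, hsn]
end

section
/- Let ρ ∈ (1/2, 1). For every natural number k ≥ 1, α(ρ, k+1) > α(ρ, k), where α(ρ,k) = ℓ_ρ(k+1) - ℓ_ρ(k). Consequently the gradients (α(ρ,k), β(ρ,k)) and (α(ρ,k+1), β(ρ,k+1)) of the limit metric on adjacent cones differ, so ψ_ρ fails to be differentiable across each line y = x/(k+1). -/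
noncomputable def alpha (ρ : ℝ) (k : ℕ) : ℝ := ell ρ ((k : ℝ) + 1) - ell ρ (k : ℝ)

noncomputable def beta (ρ : ℝ) (k : ℕ) : ℝ :=
  ell ρ 1 + (k : ℝ) * (ell ρ (k : ℝ) - ell ρ ((k : ℝ) + 1)) + ell ρ (k : ℝ)

lemma key (c t : ℝ) (hc : 0 < c) :
    2 * Real.sqrt (c^2 + t^2) <
      Real.sqrt (c^2 + (t+1)^2) + Real.sqrt (c^2 + (t-1)^2) := by
  set A := c^2 + (t+1)^2 with hA
  set B := c^2 + (t-1)^2 with hB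
  have hA0 : 0 ≤ A := by positivity
  have hB0 : 0 ≤ B := by positivity
  have ha := Real.sq_sqrt hA0
  have hb := Real.sq_sqrt hB0
  have hm := Real.sq_sqrt (show (0:ℝ) ≤ c^2 + t^2 by positivity)
  have ha0 := Real.sqrt_nonneg A
  have hb0 := Real.sqrt_nonneg B
  have hm0 := Real.sqrt_nonneg (c^2 + t^2)
  have hab : Real.sqrt A * Real.sqrt B = Real.sqrt (A * B) :=
    (Real.sqrt_mul hA0 B).symm
  have hABpos : 0 < A * B := by positivity
  have hkey : c^2 + t^2 - 1 < Real.sqrt A * Real.sqrt B := by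
    rw [hab]
    rcases le_or_gt (c^2 + t^2 - 1) 0 with h | h
    · exact lt_of_le_of_lt h (Real.sqrt_pos.mpr hABpos)
    · rw [show Real.sqrt (A*B) = Real.sqrt (A*B) from rfl]
      have : (c^2 + t^2 - 1)^2 < A * B := by
        rw [hA, hB]; nlinarith [sq_nonneg c, sq_nonneg t, sq_nonneg (c*t)]
      calc c^2 + t^2 - 1 = Real.sqrt ((c^2+t^2-1)^2) := by
            rw [Real.sqrt_sq h.le]
        _ < Real.sqrt (A*B) := Real.sqrt_lt_sqrt (by positivity) this
  have hsq : (2 * Real.sqrt (c^2+t^2))^2 < (Real.sqrt A + Real.sqrt B)^2 := by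
    nlinarith
  exact lt_of_pow_lt_pow_left₀ 2 (by positivity) hsq

theorem gradient_jump (ρ : ℝ) (hρ : ρ ∈ Set.Ioo (1/2 : ℝ) 1)
    (k : ℕ) (hk : 1 ≤ k) :
    alpha ρ (k + 1) > alpha ρ k ∧
      (alpha ρ k, beta ρ k) ≠ (alpha ρ (k + 1), beta ρ (k + 1)) := by
  have hc : 0 < 1 - ρ := by linarith [hρ.2]
  have h := key (1 - ρ) ((k : ℝ) + 1 - (1 - ρ)) hc
  have h1 : alpha ρ (k + 1) > alpha ρ k := by
    unfold alpha ell
    push_cast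
    have e1 : (1 - ρ)^2 + ((k : ℝ) + 1 + 1 - (1 - ρ))^2
        = (1-ρ)^2 + (((k : ℝ) + 1 - (1 - ρ)) + 1)^2 := by ring_nf
    have e2 : (1 - ρ)^2 + ((k : ℝ) - (1 - ρ))^2
        = (1-ρ)^2 + (((k : ℝ) + 1 - (1 - ρ)) - 1)^2 := by ring_nf
    have e3 : (1 - ρ)^2 + ((k : ℝ) + 1 - (1 - ρ))^2
        = (1-ρ)^2 + ((k : ℝ) + 1 - (1 - ρ))^2 := rfl
    rw [e1, e2]
    linarith [h]
  refine ⟨h1, fun h => ne_of_lt h1 (congrArg Prod.fst h)⟩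
end

section
/- Let ρ ∈ (1/2, 1). The function ψ_ρ defined on {(x,y) : x ≥ y ≥ 0, x > 0} by ψ_ρ(x,y) = α(ρ,⌊x/y⌋)·x + β(ρ,⌊x/y⌋)·y for y > 0 (with ψ_ρ(x,0) = x) satisfies the bounds sqrt(x² + y²) ≤ ψ_ρ(x,y) ≤ x + y. -/
noncomputable def psi (ρ x y : ℝ) : ℝ :=
  if y = 0 then x else
    (ell ρ ((⌊x / y⌋ : ℝ) + 1) - ell ρ ((⌊x / y⌋ : ℝ))) * x
      + (ell ρ 1 + (⌊x / y⌋ : ℝ) * (ell ρ ((⌊x / y⌋ : ℝ)) - ell ρ ((⌊x / y⌋ : ℝ) + 1))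
          + ell ρ ((⌊x / y⌋ : ℝ))) * y

private lemma tri (a b c d : ℝ) :
    Real.sqrt ((a+c)^2+(b+d)^2) ≤ Real.sqrt (a^2+b^2) + Real.sqrt (c^2+d^2) := by
  have h := norm_add_le (⟨a, b⟩ : ℂ) ⟨c, d⟩
  simpa [Complex.norm_def, Complex.normSq_mk, Complex.normSq_apply, Complex.add_re, Complex.add_im, sq] using h

private lemma sqrt_le_add {a b : ℝ} (ha : 0 ≤ a) (hb : 0 ≤ b) :
    Real.sqrt (a^2+b^2) ≤ a + b := by
  have h := tri a 0 0 b
  simpa [Real.sqrt_sq ha, Real.sqrt_sq hb] using h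

private lemma sqrt_smul (l a b : ℝ) (hl : 0 ≤ l) :
    Real.sqrt ((l*a)^2 + (l*b)^2) = l * Real.sqrt (a^2+b^2) := by
  rw [show (l*a)^2+(l*b)^2 = l^2*(a^2+b^2) by ring, Real.sqrt_mul (sq_nonneg l),
    Real.sqrt_sq hl]

theorem psi_bounds (ρ : ℝ) (hρ : ρ ∈ Set.Ioo (1/2 : ℝ) 1)
    (x y : ℝ) (hy : 0 ≤ y) (hxy : y ≤ x) (hx : 0 < x) :
    Real.sqrt (x^2 + y^2) ≤ psi ρ x y ∧ psi ρ x y ≤ x + y := by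
  obtain ⟨hρ1, hρ2⟩ := hρ
  by_cases hy0 : y = 0
  · subst hy0
    constructor
    · simp [psi, Real.sqrt_sq hx.le]
    · simp [psi]
  have hy' : 0 < y := lt_of_le_of_ne hy (Ne.symm hy0)
  set t := x / y with ht
  have ht1 : 1 ≤ t := (one_le_div hy').2 hxy
  set K : ℝ := ((⌊t⌋ : ℤ) : ℝ) with hK
  have hKt : K ≤ t := Int.floor_le t
  have htK : t < K + 1 := Int.lt_floor_add_one t
  have hK1 : 1 ≤ K := by
    have : (1 : ℤ) ≤ ⌊t⌋ := Int.le_floor.2 (by exact_mod_cast ht1)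
    rw [hK]; exact_mod_cast this
  have hxt : x = t * y := by rw [ht, div_mul_cancel₀ x hy0]
  have hρ0 : 0 ≤ 1 - ρ := by linarith
  -- ℓ(s) ≤ s for s ≥ 1
  have hls : ∀ s : ℝ, 1 ≤ s → ell ρ s ≤ s := by
    intro s hs
    have h := sqrt_le_add hρ0 (show (0:ℝ) ≤ s - (1 - ρ) by linarith)
    unfold ell; linarith
  have hl1 : ell ρ 1 ≤ 1 := hls 1 le_rfl
  have hlK : ell ρ K ≤ K := hls K hK1
  have hlK1 : ell ρ (K+1) ≤ K+1 := hls (K+1) (by linarith)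
  -- chord inequality (convexity of ℓ)
  have hchord : ell ρ t ≤ (1-(t-K)) * ell ρ K + (t-K) * ell ρ (K+1) := by
    have h := tri ((1-(t-K))*(1-ρ)) ((1-(t-K))*(K-(1-ρ)))
      ((t-K)*(1-ρ)) ((t-K)*((K+1)-(1-ρ)))
    rw [sqrt_smul _ _ _ (by linarith), sqrt_smul _ _ _ (by linarith)] at h
    unfold ell
    calc Real.sqrt ((1-ρ)^2 + (t-(1-ρ))^2)
        = Real.sqrt (((1-(t-K))*(1-ρ) + (t-K)*(1-ρ))^2
            + ((1-(t-K))*(K-(1-ρ)) + (t-K)*((K+1)-(1-ρ)))^2) := by ring_nf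
      _ ≤ _ := h
  -- triangle inequality: √(t²+1) ≤ ℓ(1) + ℓ(t)
  have htri : Real.sqrt (t^2+1) ≤ ell ρ 1 + ell ρ t := by
    have h := tri (1-ρ) (1-(1-ρ)) (t-(1-ρ)) (1-ρ)
    unfold ell
    calc Real.sqrt (t^2+1)
        = Real.sqrt (((1-ρ)+(t-(1-ρ)))^2 + ((1-(1-ρ))+(1-ρ))^2) := by ring_nf
      _ ≤ Real.sqrt ((1-ρ)^2+(1-(1-ρ))^2) + Real.sqrt ((t-(1-ρ))^2+(1-ρ)^2) := h
      _ = Real.sqrt ((1-ρ)^2+(1-(1-ρ))^2) + Real.sqrt ((1-ρ)^2+(t-(1-ρ))^2) := by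
          rw [add_comm ((t-(1-ρ))^2)]
  have hpsi : psi ρ x y = (ell ρ (K+1) - ell ρ K) * x
      + (ell ρ 1 + K * (ell ρ K - ell ρ (K+1)) + ell ρ K) * y := by
    rw [psi, if_neg hy0]
  have key : psi ρ x y
      = y * ((1-(t-K)) * ell ρ K + (t-K) * ell ρ (K+1) + ell ρ 1) := by
    rw [hpsi, hxt]; ring
  constructor
  · calc Real.sqrt (x^2+y^2) = y * Real.sqrt (t^2+1) := by
          rw [show x^2+y^2 = (y*t)^2+(y*1)^2 by rw [hxt]; ring, sqrt_smul y t 1 hy'.le]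
          norm_num
      _ ≤ y * (ell ρ 1 + ell ρ t) := mul_le_mul_of_nonneg_left htri hy'.le
      _ ≤ y * ((1-(t-K)) * ell ρ K + (t-K) * ell ρ (K+1) + ell ρ 1) := by
          apply mul_le_mul_of_nonneg_left _ hy'.le
          linarith
      _ = psi ρ x y := key.symm
  · rw [key]
    have h1 : (0:ℝ) ≤ 1 - (t-K) := by linarith
    have h2 : (0:ℝ) ≤ t - K := by linarith
    have e1 := mul_le_mul_of_nonneg_left hlK h1
    have e2 := mul_le_mul_of_nonneg_left hlK1 h2
    calc y * ((1-(t-K)) * ell ρ K + (t-K) * ell ρ (K+1) + ell ρ 1)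
        ≤ y * ((1-(t-K)) * K + (t-K) * (K+1) + 1) := by
          apply mul_le_mul_of_nonneg_left _ hy'.le; linarith
      _ = x + y := by rw [hxt]; ring
end

section
/- Let ρ ∈ (1/2, 1) and M ≥ N ≥ 1 naturals. Then 𝓛_ρ(M,N) < M + N, i.e. the optimal geodesic is strictly shorter than the Manhattan path, and 𝓛_ρ(M,N) ≥ sqrt(M² + N²). -/
set_option maxHeartbeats 1000000

lemma sqrt_scale (c p q : ℝ) (hc : 0 ≤ c) :
    c * Real.sqrt (p^2 + q^2) = Real.sqrt ((c*p)^2 + (c*q)^2) := by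
  rw [show (c*p)^2 + (c*q)^2 = c^2 * (p^2 + q^2) by ring,
    Real.sqrt_mul (sq_nonneg c), Real.sqrt_sq hc]

lemma mink (p₁ q₁ p₂ q₂ : ℝ) :
    Real.sqrt ((p₁+p₂)^2 + (q₁+q₂)^2) ≤
      Real.sqrt (p₁^2+q₁^2) + Real.sqrt (p₂^2+q₂^2) := by
  have h1 := Real.sqrt_nonneg (p₁^2+q₁^2)
  have h2 := Real.sqrt_nonneg (p₂^2+q₂^2)
  have e1 : Real.sqrt (p₁^2+q₁^2) ^ 2 = p₁^2+q₁^2 := Real.sq_sqrt (by positivity)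
  have e2 : Real.sqrt (p₂^2+q₂^2) ^ 2 = p₂^2+q₂^2 := Real.sq_sqrt (by positivity)
  have hcs : p₁*p₂ + q₁*q₂ ≤ Real.sqrt (p₁^2+q₁^2) * Real.sqrt (p₂^2+q₂^2) := by
    nlinarith [sq_nonneg (p₁*q₂ - p₂*q₁), mul_nonneg h1 h2,
      sq_nonneg (Real.sqrt (p₁^2+q₁^2) * Real.sqrt (p₂^2+q₂^2) + (p₁*p₂ + q₁*q₂))]
  calc Real.sqrt ((p₁+p₂)^2 + (q₁+q₂)^2)
      ≤ Real.sqrt ((Real.sqrt (p₁^2+q₁^2) + Real.sqrt (p₂^2+q₂^2))^2) := by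
        apply Real.sqrt_le_sqrt; nlinarith [hcs]
    _ = _ := Real.sqrt_sq (by positivity)

theorem Lcal_bounds (ρ : ℝ) (hρ : ρ ∈ Set.Ioo (1/2 : ℝ) 1)
    (M N : ℕ) (hN : 1 ≤ N) (hMN : N ≤ M) :
    Lcal ρ M N < (M : ℝ) + (N : ℝ) ∧
      Real.sqrt ((M : ℝ)^2 + (N : ℝ)^2) ≤ Lcal ρ M N := by
  obtain ⟨hρ1, hρ2⟩ := hρ
  have ha0 : 0 < 1 - ρ := by linarith
  have ha2 : 1 - ρ < 1/2 := by linarith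
  have hrN : M % N < N := Nat.mod_lt _ (by omega)
  have hrdef : M - M / N * N = M % N := by
    rw [Nat.mod_def, Nat.mul_comm]
  have hq1 : 1 ≤ M / N := (Nat.one_le_div_iff (by omega)).2 hMN
  have hMeq : M = M / N * N + M % N := by
    rw [Nat.mul_comm]; exact (Nat.div_add_mod M N).symm
  -- real versions
  have hNr : (1:ℝ) ≤ (N:ℝ) := by exact_mod_cast hN
  have hQ1 : (1:ℝ) ≤ ((M / N : ℕ):ℝ) := by exact_mod_cast hq1
  have hR0 : (0:ℝ) ≤ ((M % N : ℕ):ℝ) := by positivity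
  have hRN : ((M % N : ℕ):ℝ) < (N:ℝ) := by exact_mod_cast hrN
  have hMcast : (M:ℝ) = ((M / N : ℕ):ℝ) * (N:ℝ) + ((M % N : ℕ):ℝ) := by
    exact_mod_cast hMeq
  have hLcal : Lcal ρ M N = (N:ℝ) * ell ρ 1 + ((M % N : ℕ):ℝ) * ell ρ (((M / N : ℕ):ℝ)+1)
      + ((N:ℝ) - ((M % N : ℕ):ℝ)) * ell ρ ((M / N : ℕ):ℝ) := by
    rw [Lcal, hrdef, Nat.cast_sub (le_of_lt hrN)]
  have hell_le : ∀ x : ℝ, 1 ≤ x → ell ρ x ≤ x := by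
    intro x hx
    rw [ell]
    calc Real.sqrt ((1-ρ)^2 + (x - (1-ρ))^2) ≤ Real.sqrt (x^2) := by
          apply Real.sqrt_le_sqrt; nlinarith
      _ = x := Real.sqrt_sq (by linarith)
  have hell1 : ell ρ 1 < 1 := by
    rw [ell]
    calc Real.sqrt ((1-ρ)^2 + (1 - (1-ρ))^2) < Real.sqrt 1 := by
          apply Real.sqrt_lt_sqrt (by positivity); nlinarith
      _ = 1 := Real.sqrt_one
  constructor
  · rw [hLcal]
    have A : (N:ℝ) * ell ρ 1 < (N:ℝ) * 1 :=
      mul_lt_mul_of_pos_left hell1 (by linarith)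
    have B : ((M % N : ℕ):ℝ) * ell ρ (((M / N : ℕ):ℝ)+1)
        ≤ ((M % N : ℕ):ℝ) * (((M / N : ℕ):ℝ)+1) :=
      mul_le_mul_of_nonneg_left (hell_le _ (by linarith)) hR0
    have C : ((N:ℝ) - ((M % N : ℕ):ℝ)) * ell ρ ((M / N : ℕ):ℝ)
        ≤ ((N:ℝ) - ((M % N : ℕ):ℝ)) * ((M / N : ℕ):ℝ) :=
      mul_le_mul_of_nonneg_left (hell_le _ hQ1) (by linarith)
    nlinarith [A, B, C]
  · rw [hLcal]
    set Q : ℝ := ((M / N : ℕ):ℝ) with hQdef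
    set R : ℝ := ((M % N : ℕ):ℝ) with hRdef
    have hNnn : (0:ℝ) ≤ (N:ℝ) := by linarith
    have hNRnn : (0:ℝ) ≤ (N:ℝ) - R := by linarith
    have E1 : (N:ℝ) * ell ρ 1
        = Real.sqrt (((N:ℝ)*(1-ρ))^2 + ((N:ℝ)*(1 - (1-ρ)))^2) := by
      rw [ell]; exact sqrt_scale _ _ _ hNnn
    have E2 : R * ell ρ (Q+1)
        = Real.sqrt ((R*(1-ρ))^2 + (R*(Q+1 - (1-ρ)))^2) := by
      rw [ell]; exact sqrt_scale _ _ _ hR0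
    have E3 : ((N:ℝ) - R) * ell ρ Q
        = Real.sqrt ((((N:ℝ)-R)*(1-ρ))^2 + (((N:ℝ)-R)*(Q - (1-ρ)))^2) := by
      rw [ell]; exact sqrt_scale _ _ _ hNRnn
    rw [E1, E2, E3]
    have M1 := mink (R*(1-ρ)) (R*(Q+1-(1-ρ)))
      (((N:ℝ)-R)*(1-ρ)) (((N:ℝ)-R)*(Q-(1-ρ)))
    have M2 := mink ((N:ℝ)*(1-ρ)) ((N:ℝ)*(1-(1-ρ)))
      (R*(1-ρ) + ((N:ℝ)-R)*(1-ρ)) (R*(Q+1-(1-ρ)) + ((N:ℝ)-R)*(Q-(1-ρ)))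
    have key : Real.sqrt ((M:ℝ)^2 + (N:ℝ)^2) ≤
        Real.sqrt (((N:ℝ)*(1-ρ) + (R*(1-ρ) + ((N:ℝ)-R)*(1-ρ)))^2
          + ((N:ℝ)*(1-(1-ρ)) + (R*(Q+1-(1-ρ)) + ((N:ℝ)-R)*(Q-(1-ρ))))^2) := by
      apply Real.sqrt_le_sqrt
      have ht : 2*(N:ℝ)*(1-ρ) ≤ (N:ℝ) := by nlinarith
      have hNM : (N:ℝ) ≤ (M:ℝ) := by exact_mod_cast hMN
      have h1 : (N:ℝ)*(1-ρ) + (R*(1-ρ) + ((N:ℝ)-R)*(1-ρ)) = 2*(N:ℝ)*(1-ρ) := by ring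
      have h2 : (N:ℝ)*(1-(1-ρ)) + (R*(Q+1-(1-ρ)) + ((N:ℝ)-R)*(Q-(1-ρ)))
          = (M:ℝ) + (N:ℝ) - 2*(N:ℝ)*(1-ρ) := by rw [hMcast]; ring
      rw [h1, h2]
      nlinarith [mul_nonneg (sub_nonneg.2 (le_trans ht hNM)) (sub_nonneg.2 ht)]
    linarith [key, M1, M2]
end
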